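/- Soundness of polarized subtyping for call-by-name: for call-by-name type names t, u and their Levy translations [t]_N, [u]_N into negative CBPV type names, (1) if [t]_N full (CBPV fullness) then t full (CBN fullness, i.e. t = &{}), and (2) if [t]_N ≤ [u]_N (CBPV negative subtyping) then t ≤ u (CBN subtyping). -/

import Mathlib

namespace CBPV

abbrev Label := String
abbrev Var := String

-- Positive types (values); `name` refers to an equirecursively defined type name.
mutual
inductive PosTp : Type where
  | name : String → PosTp
  | str  : PosStr → PosTp

/-- Structural positive types. -/
inductive PosStr : Type where
  | tensor : PosTp → PosTp → PosStr
  | one    : PosStr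
  | plus   : List (Label × PosTp) → PosStr
  | down   : NegTp → PosStr

/-- Negative types (computations). -/
inductive NegTp : Type where
  | name : String → NegTp
  | str  : NegStr → NegTp

/-- Structural negative types. -/
inductive NegStr : Type where
  | arrow   : PosTp → NegTp → NegStr
  | withRec : List (Label × NegTp) → NegStr
  | up      : PosTp → NegStr
end

mutual
/-- Values. -/
inductive Val : Type where
  | var   : Var → Val
  | pair  : Val → Val → Val
  | unit  : Val
  | inj   : Label → Val → Val
  | thunk : Comp → Val

/-- Computations. -/
inductive Comp : Type where
  | lam       : Var → Comp → Comp
  | app       : Comp → Val → Comp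
  | record    : List (Label × Comp) → Comp
  | proj      : Comp → Label → Comp
  | ret       : Val → Comp
  | letret    : Var → Comp → Comp → Comp
  | name      : String → Comp
  | matchPair : Val → Var → Var → Comp → Comp
  | matchUnit : Val → Comp → Comp
  | matchSum  : Val → List (Label × Var × Comp) → Comp
  | force     : Val → Comp
end

/-- A global signature: equirecursive (contractive) type definitions `t = τ⁺`,
`s = σ⁻`, and recursive expression definitions `f : σ⁻ = e`. -/
structure Signature : Type where
  pos  : String → PosStr
  neg  : String → NegStr
  defs : String → NegTp × Comp

mutual
/-- Substitution of value `w` for variable `x` in a value. -/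
def substV (w : Val) (x : Var) : Val → Val
  | .var y => if y = x then w else .var y
  | .pair v₁ v₂ => .pair (substV w x v₁) (substV w x v₂)
  | .unit => .unit
  | .inj j v => .inj j (substV w x v)
  | .thunk e => .thunk (substC w x e)

/-- Substitution of value `w` for variable `x` in a computation. -/
def substC (w : Val) (x : Var) : Comp → Comp
  | .lam y e => .lam y (if y = x then e else substC w x e)
  | .app e v => .app (substC w x e) (substV w x v)
  | .record L => .record (substRec w x L)
  | .proj e j => .proj (substC w x e) j
  | .ret v => .ret (substV w x v)
  | .letret y e₁ e₂ => .letret y (substC w x e₁) (if y = x then e₂ else substC w x e₂)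
  | .name f => .name f
  | .matchPair v y z e =>
      .matchPair (substV w x v) y z (if y = x ∨ z = x then e else substC w x e)
  | .matchUnit v e => .matchUnit (substV w x v) (substC w x e)
  | .matchSum v B => .matchSum (substV w x v) (substBr w x B)
  | .force v => .force (substV w x v)

def substRec (w : Val) (x : Var) : List (Label × Comp) → List (Label × Comp)
  | [] => []
  | (l, e) :: rest => (l, substC w x e) :: substRec w x rest

def substBr (w : Val) (x : Var) : List (Label × Var × Comp) → List (Label × Var × Comp)
  | [] => []
  | (l, y, e) :: rest =>
      (l, y, if y = x then e else substC w x e) :: substBr w x rest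
end

/-- Terminal computations. -/
inductive Terminal : Comp → Prop where
  | lam    : Terminal (.lam x e)
  | record : Terminal (.record L)
  | ret    : Terminal (.ret v)

/-- Small-step dynamics of call-by-push-value, relative to a signature. -/
inductive Step (Sg : Signature) : Comp → Comp → Prop where
  | beta       : Step Sg (.app (.lam x e) v) (substC v x e)
  | app        : Step Sg e e' → Step Sg (.app e v) (.app e' v)
  | letretBeta : Step Sg (.letret x (.ret v) e₂) (substC v x e₂)
  | letretStep : Step Sg e₁ e₁' → Step Sg (.letret x e₁ e₂) (.letret x e₁' e₂)
  | projBeta   : L.lookup j = some e → Step Sg (.proj (.record L) j) e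
  | projStep   : Step Sg e e' → Step Sg (.proj e j) (.proj e' j)
  | matchPair  : Step Sg (.matchPair (.pair v₁ v₂) x y e) (substC v₁ x (substC v₂ y e))
  | matchUnit  : Step Sg (.matchUnit .unit e) e
  | matchSum   : B.lookup j = some (x, ej) → Step Sg (.matchSum (.inj j v) B) (substC v x ej)
  | force      : Step Sg (.force (.thunk e)) e
  | name       : Sg.defs f = (σ, e) → Step Sg (.name f) e

end CBPV

namespace CBPV

def PosTp.IsName : PosTp → Prop := fun τ => ∃ t, τ = .name t
def NegTp.IsName : NegTp → Prop := fun σ => ∃ s, σ = .name s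

/-- A structural positive type is in normal form if all of its components are
type names, and its label lists have no duplicate labels. -/
def PosStrNormal : PosStr → Prop
  | .tensor τ₁ τ₂ => τ₁.IsName ∧ τ₂.IsName
  | .one => True
  | .plus L => (∀ p ∈ L, (Prod.snd p).IsName) ∧ (L.map Prod.fst).Nodup
  | .down σ => σ.IsName

def NegStrNormal : NegStr → Prop
  | .arrow τ σ => τ.IsName ∧ σ.IsName
  | .withRec L => (∀ p ∈ L, (Prod.snd p).IsName) ∧ (L.map Prod.fst).Nodup
  | .up τ => τ.IsName

/-- A signature is in normal form when every type definition alternates between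
type names and structural types, i.e. the components of every defined
structural type are themselves type names. -/
def SigNormal (Sg : Signature) : Prop :=
  (∀ t, PosStrNormal (Sg.pos t)) ∧ (∀ s, NegStrNormal (Sg.neg s))

/-- One unfolding of the rules for the emptiness judgment `t empty`. -/
def EmptyUnf (Sg : Signature) (S : String → Prop) (t : String) : Prop :=
  (∃ L, Sg.pos t = .plus L ∧
     ∀ p ∈ L, ∃ tj, Prod.snd p = PosTp.name tj ∧ S tj) ∨
  (∃ t₁ t₂, Sg.pos t = .tensor (.name t₁) (.name t₂) ∧ (S t₁ ∨ S t₂))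

/-- `t empty`: the greatest fixed point (circular derivations) of the
emptiness rules. -/
def TpEmpty (Sg : Signature) (t : String) : Prop :=
  ∃ S : String → Prop, (∀ u, S u → EmptyUnf Sg S u) ∧ S t

/-- `s full`: `s = t₁ → s₂ ∈ Σ` with `t₁ empty`, or `s = &{} ∈ Σ`. -/
def TpFull (Sg : Signature) (s : String) : Prop :=
  (∃ t₁ s₂, Sg.neg s = .arrow (.name t₁) (.name s₂) ∧ TpEmpty Sg t₁) ∨
  Sg.neg s = .withRec []

/-- One unfolding of the rules for positive subtyping `t ≤ u` between
positive type names. -/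
def PosSubUnf (Sg : Signature) (P N : String → String → Prop) (t u : String) : Prop :=
  (∃ t₁ t₂ u₁ u₂, Sg.pos t = .tensor (.name t₁) (.name t₂) ∧
     Sg.pos u = .tensor (.name u₁) (.name u₂) ∧ P t₁ u₁ ∧ P t₂ u₂) ∨
  (Sg.pos t = .one ∧ Sg.pos u = .one) ∨
  (∃ L K, Sg.pos t = .plus L ∧ Sg.pos u = .plus K ∧
     ∀ p ∈ L, ∃ tj, Prod.snd p = PosTp.name tj ∧
       (TpEmpty Sg tj ∨ ∃ uj, K.lookup (Prod.fst p) = some (PosTp.name uj) ∧ P tj uj)) ∨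
  (∃ s r, Sg.pos t = .down (.name s) ∧ Sg.pos u = .down (.name r) ∧ N s r) ∨
  TpEmpty Sg t

/-- One unfolding of the rules for negative subtyping `s ≤ r` between
negative type names. -/
def NegSubUnf (Sg : Signature) (P N : String → String → Prop) (s r : String) : Prop :=
  (∃ t₁ s₂ u₁ r₂, Sg.neg s = .arrow (.name t₁) (.name s₂) ∧
     Sg.neg r = .arrow (.name u₁) (.name r₂) ∧ P u₁ t₁ ∧ N s₂ r₂) ∨
  (∃ t u, Sg.neg s = .up (.name t) ∧ Sg.neg r = .up (.name u) ∧ P t u) ∨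
  (∃ L K, Sg.neg s = .withRec L ∧ Sg.neg r = .withRec K ∧
     ∀ p ∈ K, ∃ rj, Prod.snd p = NegTp.name rj ∧
       ∃ sj, L.lookup (Prod.fst p) = some (NegTp.name sj) ∧ N sj rj) ∨
  (∃ t, Sg.neg s = .up (.name t) ∧ TpEmpty Sg t) ∨
  TpFull Sg r

/-- `t ≤ u`: syntactic subtyping between positive type names, interpreted as
circular derivations (greatest fixed point of the subtyping rules). -/
def PosSub (Sg : Signature) (t u : String) : Prop :=
  ∃ P N : String → String → Prop,
    (∀ a b, P a b → PosSubUnf Sg P N a b) ∧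
    (∀ a b, N a b → NegSubUnf Sg P N a b) ∧ P t u

/-- `s ≤ r`: syntactic subtyping between negative type names, interpreted as
circular derivations (greatest fixed point of the subtyping rules). -/
def NegSub (Sg : Signature) (s r : String) : Prop :=
  ∃ P N : String → String → Prop,
    (∀ a b, P a b → PosSubUnf Sg P N a b) ∧
    (∀ a b, N a b → NegSubUnf Sg P N a b) ∧ N s r

end CBPV

namespace CBPV

/-- Structural source-language types (for call-by-name and call-by-value),
with type-name components: functions, eager pairs, unit, variant records and
lazy records. -/
inductive SrcTp : Type where
  | arrow   : String → String → SrcTp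
  | tensor  : String → String → SrcTp
  | one     : SrcTp
  | plus    : List (Label × String) → SrcTp
  | withRec : List (Label × String) → SrcTp

/-- A source-language signature of equirecursive type-name definitions. -/
structure SrcSig : Type where
  def_ : String → SrcTp

end CBPV

namespace CBPV

/-- Call-by-name fullness: `t full` iff `t = &{}`. -/
def CBNFull (S : SrcSig) (t : String) : Prop := S.def_ t = .withRec []

/-- One unfolding of the rules for call-by-name subtyping `t ≤ u`. -/
def CBNUnf (S : SrcSig) (R : String → String → Prop) (t u : String) : Prop :=
  (∃ t₁ t₂ u₁ u₂, S.def_ t = .arrow t₁ t₂ ∧ S.def_ u = .arrow u₁ u₂ ∧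
     R u₁ t₁ ∧ R t₂ u₂) ∨
  (∃ t₁ t₂ u₁ u₂, S.def_ t = .tensor t₁ t₂ ∧ S.def_ u = .tensor u₁ u₂ ∧
     R t₁ u₁ ∧ R t₂ u₂) ∨
  (S.def_ t = .one ∧ S.def_ u = .one) ∨
  (∃ L J, S.def_ t = .plus L ∧ S.def_ u = .plus J ∧
     ∀ p ∈ L, ∃ uℓ, J.lookup (Prod.fst p) = some uℓ ∧ R (Prod.snd p) uℓ) ∨
  (∃ L J, S.def_ t = .withRec L ∧ S.def_ u = .withRec J ∧
     ∀ p ∈ J, ∃ tj, L.lookup (Prod.fst p) = some tj ∧ R tj (Prod.snd p)) ∨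
  (S.def_ t = .plus []) ∨
  CBNFull S u

/-- Call-by-name subtyping `t ≤ u`, interpreted as circular derivations
(greatest fixed point of the call-by-name subtyping rules). -/
def CBNSub (S : SrcSig) (t u : String) : Prop :=
  ∃ R : String → String → Prop, (∀ a b, R a b → CBNUnf S R a b) ∧ R t u

/-- Levy's call-by-name translation of types, specified relationally:
`tr t` is the CBPV negative type name `[t]_N`, and the translated signature is
in normal form, with auxiliary type names inserted as needed:
`[τ→σ]_N = ↓[τ]_N → [σ]_N`, `[τ₁⊗τ₂]_N = ↑(↓[τ₁]_N ⊗ ↓[τ₂]_N)`, `[1]_N = ↑1`,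
`[⊕{ℓ:τ_ℓ}]_N = ↑⊕{ℓ:↓[τ_ℓ]_N}`, and `[&{ℓ:σ_ℓ}]_N = &{ℓ:[σ_ℓ]_N}`. -/
def CBNTrans (S : SrcSig) (Sg : Signature) (tr : String → String) : Prop :=
  ∀ t : String,
    match S.def_ t with
    | .arrow t₁ t₂ => ∃ p,
        Sg.neg (tr t) = .arrow (.name p) (.name (tr t₂)) ∧
        Sg.pos p = .down (.name (tr t₁))
    | .tensor t₁ t₂ => ∃ q p₁ p₂,
        Sg.neg (tr t) = .up (.name q) ∧
        Sg.pos q = .tensor (.name p₁) (.name p₂) ∧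
        Sg.pos p₁ = .down (.name (tr t₁)) ∧
        Sg.pos p₂ = .down (.name (tr t₂))
    | .one => ∃ q, Sg.neg (tr t) = .up (.name q) ∧ Sg.pos q = .one
    | .plus L => ∃ (q : String) (P : Label × String → String),
        Sg.neg (tr t) = .up (.name q) ∧
        Sg.pos q = .plus (L.map (fun p => (p.1, PosTp.name (P p)))) ∧
        ∀ p ∈ L, Sg.pos (P p) = .down (.name (tr (Prod.snd p)))
    | .withRec L =>
        Sg.neg (tr t) = .withRec (L.map (fun p => (p.1, NegTp.name (tr p.2))))

end CBPV

namespace CBPV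

section Sound

variable {Sg : Signature}

lemma lookup_map_named {α β : Type} (g : Label × α → β) :
    ∀ (J : List (Label × α)) (l : Label) (v : β),
      (J.map (fun p => (p.1, g p))).lookup l = some v →
      ∃ p ∈ J, J.lookup l = some p.2 ∧ v = g p := by
  intro J
  induction J with
  | nil => intro l v h; simp [List.lookup] at h
  | cons q J ih =>
    obtain ⟨k, x⟩ := q
    intro l v h
    by_cases hl : l = k
    · subst hl
      have hb : (l == l) = true := by simp
      simp only [List.map_cons, List.lookup, hb] at h
      refine ⟨(l, x), by simp, ?_, by injection h with h; exact h.symm⟩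
      simp only [List.lookup, hb]
    · have hb : (l == k) = false := beq_eq_false_iff_ne.mpr hl
      simp only [List.map_cons, List.lookup, hb] at h
      obtain ⟨p, hp, hlook, hv⟩ := ih l v h
      refine ⟨p, List.mem_cons_of_mem _ hp, ?_, hv⟩
      simp only [List.lookup, hb]
      exact hlook

lemma TpEmpty.unfold {t : String} (h : TpEmpty Sg t) : EmptyUnf Sg (TpEmpty Sg) t := by
  obtain ⟨Sm, hS, hSt⟩ := h
  rcases hS t hSt with ⟨L, hL, hall⟩ | ⟨t₁, t₂, hts, hor⟩
  · refine Or.inl ⟨L, hL, fun p hp => ?_⟩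
    obtain ⟨tj, h1, h2⟩ := hall p hp
    exact ⟨tj, h1, Sm, hS, h2⟩
  · exact Or.inr ⟨t₁, t₂, hts, hor.imp (fun h => ⟨Sm, hS, h⟩) (fun h => ⟨Sm, hS, h⟩)⟩

lemma not_empty_down {p : String} {σ : NegTp} (h : Sg.pos p = .down σ) :
    ¬ TpEmpty Sg p := by
  intro he
  rcases he.unfold with ⟨L, hL, _⟩ | ⟨t₁, t₂, ht, _⟩
  · rw [h] at hL; exact PosStr.noConfusion hL
  · rw [h] at ht; exact PosStr.noConfusion ht

lemma one_not_empty {q : String} (h : Sg.pos q = .one) : ¬ TpEmpty Sg q := by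
  intro he
  rcases he.unfold with ⟨L, hL, _⟩ | ⟨t₁, t₂, ht, _⟩
  · rw [h] at hL; exact PosStr.noConfusion hL
  · rw [h] at ht; exact PosStr.noConfusion ht

lemma tensor_downs_not_empty {q p₁ p₂ : String} {σ₁ σ₂ : NegTp}
    (hq : Sg.pos q = .tensor (.name p₁) (.name p₂))
    (h1 : Sg.pos p₁ = .down σ₁) (h2 : Sg.pos p₂ = .down σ₂) : ¬ TpEmpty Sg q := by
  intro he
  rcases he.unfold with ⟨L, hL, _⟩ | ⟨t₁, t₂, ht, hor⟩
  · rw [hq] at hL; exact PosStr.noConfusion hL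
  · rw [hq] at ht
    injection ht with ha hb
    injection ha with ha; injection hb with hb
    subst ha; subst hb
    rcases hor with h | h
    · exact not_empty_down h1 h
    · exact not_empty_down h2 h

lemma plus_downs_empty {q : String} {α : Type} {L : List (Label × α)}
    {Pf : Label × α → String}
    (hq : Sg.pos q = .plus (L.map fun p => (p.1, .name (Pf p))))
    (hd : ∀ p ∈ L, ∃ σ, Sg.pos (Pf p) = PosStr.down σ)
    (he : TpEmpty Sg q) : L = [] := by
  cases L with
  | nil => rfl
  | cons p L =>
    exfalso
    rcases he.unfold with ⟨L', hL', hall⟩ | ⟨t₁, t₂, ht, _⟩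
    · rw [hq] at hL'
      injection hL' with hL'
      subst hL'
      obtain ⟨tj, hj, hje⟩ := hall (p.1, .name (Pf p)) (by simp)
      injection hj with hj
      subst hj
      obtain ⟨σ, hσ⟩ := hd p (by simp)
      exact not_empty_down hσ hje
    · rw [hq] at ht; exact PosStr.noConfusion ht

lemma PosSubUnf.mono {P N P' N' : String → String → Prop}
    (hP : ∀ a b, P a b → P' a b) (hN : ∀ a b, N a b → N' a b) {t u : String}
    (h : PosSubUnf Sg P N t u) : PosSubUnf Sg P' N' t u := by
  rcases h with ⟨t₁,t₂,u₁,u₂,h1,h2,h3,h4⟩ | ⟨h1,h2⟩ | ⟨L,K,h1,h2,h3⟩ | ⟨s,r,h1,h2,h3⟩ | h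
  · exact Or.inl ⟨t₁,t₂,u₁,u₂,h1,h2,hP _ _ h3, hP _ _ h4⟩
  · exact Or.inr (Or.inl ⟨h1,h2⟩)
  · refine Or.inr (Or.inr (Or.inl ⟨L,K,h1,h2,fun p hp => ?_⟩))
    obtain ⟨tj, he, hc⟩ := h3 p hp
    refine ⟨tj, he, hc.imp id (fun h => ?_)⟩
    obtain ⟨uj, hl, hp'⟩ := h
    exact ⟨uj, hl, hP _ _ hp'⟩
  · exact Or.inr (Or.inr (Or.inr (Or.inl ⟨s,r,h1,h2,hN _ _ h3⟩)))
  · exact Or.inr (Or.inr (Or.inr (Or.inr h)))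

lemma NegSubUnf.mono {P N P' N' : String → String → Prop}
    (hP : ∀ a b, P a b → P' a b) (hN : ∀ a b, N a b → N' a b) {s r : String}
    (h : NegSubUnf Sg P N s r) : NegSubUnf Sg P' N' s r := by
  rcases h with ⟨t₁,s₂,u₁,r₂,h1,h2,h3,h4⟩ | ⟨t,u,h1,h2,h3⟩ | ⟨L,K,h1,h2,h3⟩ | ⟨t,h1,h2⟩ | h
  · exact Or.inl ⟨t₁,s₂,u₁,r₂,h1,h2,hP _ _ h3, hN _ _ h4⟩
  · exact Or.inr (Or.inl ⟨t,u,h1,h2,hP _ _ h3⟩)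
  · refine Or.inr (Or.inr (Or.inl ⟨L,K,h1,h2,fun p hp => ?_⟩))
    obtain ⟨rj, he, sj, hl, hn⟩ := h3 p hp
    exact ⟨rj, he, sj, hl, hN _ _ hn⟩
  · exact Or.inr (Or.inr (Or.inr (Or.inl ⟨t,h1,h2⟩)))
  · exact Or.inr (Or.inr (Or.inr (Or.inr h)))

lemma PosSub.unfold {a b : String} (h : PosSub Sg a b) :
    PosSubUnf Sg (PosSub Sg) (NegSub Sg) a b := by
  obtain ⟨P, N, hP, hN, hab⟩ := h
  exact (hP a b hab).mono (fun x y hxy => ⟨P, N, hP, hN, hxy⟩)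
    (fun x y hxy => ⟨P, N, hP, hN, hxy⟩)

lemma NegSub.unfold {a b : String} (h : NegSub Sg a b) :
    NegSubUnf Sg (PosSub Sg) (NegSub Sg) a b := by
  obtain ⟨P, N, hP, hN, hab⟩ := h
  exact (hN a b hab).mono (fun x y hxy => ⟨P, N, hP, hN, hxy⟩)
    (fun x y hxy => ⟨P, N, hP, hN, hxy⟩)

lemma down_sub {a b s r : String} (ha : Sg.pos a = .down (.name s))
    (hb : Sg.pos b = .down (.name r)) (h : PosSub Sg a b) : NegSub Sg s r := by
  rcases h.unfold with ⟨t₁,t₂,u₁,u₂,h1,_⟩ | ⟨h1,_⟩ | ⟨L,K,h1,_⟩ | ⟨s',r',h1,h2,h3⟩ | hemp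
  · rw [ha] at h1; exact PosStr.noConfusion h1
  · rw [ha] at h1; exact PosStr.noConfusion h1
  · rw [ha] at h1; exact PosStr.noConfusion h1
  · rw [ha] at h1; rw [hb] at h2
    injection h1 with h1; injection h1 with h1
    injection h2 with h2; injection h2 with h2
    subst h1; subst h2; exact h3
  · exact absurd hemp (not_empty_down ha)

lemma up_empty {S : SrcSig} {tr : String → String} (htr : CBNTrans S Sg tr)
    {a q : String} (hup : Sg.neg (tr a) = .up (.name q)) (he : TpEmpty Sg q) :
    S.def_ a = .plus [] := by
  have h := htr a
  cases hdef : S.def_ a <;> rw [hdef] at h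
  case arrow t₁ t₂ =>
    obtain ⟨p, h1, _⟩ := h; rw [hup] at h1; exact NegStr.noConfusion h1
  case tensor t₁ t₂ =>
    obtain ⟨q', p₁, p₂, h1, h2, h3, h4⟩ := h
    rw [hup] at h1; injection h1 with h1; injection h1 with h1; subst h1
    exact absurd he (tensor_downs_not_empty h2 h3 h4)
  case one =>
    obtain ⟨q', h1, h2⟩ := h
    rw [hup] at h1; injection h1 with h1; injection h1 with h1; subst h1
    exact absurd he (one_not_empty h2)
  case plus L =>
    obtain ⟨q', Pf, h1, h2, h3⟩ := h
    rw [hup] at h1; injection h1 with h1; injection h1 with h1; subst h1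
    have hL : L = [] := plus_downs_empty h2 (fun p hp => ⟨_, h3 p hp⟩) he
    rw [hL]
  case withRec L =>
    rw [hup] at h; exact NegStr.noConfusion h

lemma full_sound {S : SrcSig} {tr : String → String} (htr : CBNTrans S Sg tr)
    {t : String} (h : TpFull Sg (tr t)) : CBNFull S t := by
  have ht := htr t
  rcases h with ⟨t₁, s₂, harr, hemp⟩ | hw
  · exfalso
    cases hdef : S.def_ t <;> rw [hdef] at ht
    case arrow a₁ a₂ =>
      obtain ⟨p, h1, h2⟩ := ht
      rw [h1] at harr
      injection harr with ha hb
      injection ha with ha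
      subst ha
      exact not_empty_down h2 hemp
    case tensor a b =>
      obtain ⟨q, p₁, p₂, h1, _⟩ := ht; rw [h1] at harr; exact NegStr.noConfusion harr
    case one =>
      obtain ⟨q, h1, _⟩ := ht; rw [h1] at harr; exact NegStr.noConfusion harr
    case plus L =>
      obtain ⟨q, Pf, h1, _⟩ := ht; rw [h1] at harr; exact NegStr.noConfusion harr
    case withRec L =>
      rw [ht] at harr; exact NegStr.noConfusion harr
  · unfold CBNFull
    cases hdef : S.def_ t <;> rw [hdef] at ht
    case arrow a₁ a₂ =>
      obtain ⟨p, h1, _⟩ := ht; rw [h1] at hw; exact NegStr.noConfusion hw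
    case tensor a b =>
      obtain ⟨q, p₁, p₂, h1, _⟩ := ht; rw [h1] at hw; exact NegStr.noConfusion hw
    case one =>
      obtain ⟨q, h1, _⟩ := ht; rw [h1] at hw; exact NegStr.noConfusion hw
    case plus L =>
      obtain ⟨q, Pf, h1, _⟩ := ht; rw [h1] at hw; exact NegStr.noConfusion hw
    case withRec L =>
      rw [ht] at hw
      injection hw with hw
      rw [List.map_eq_nil_iff.mp hw]

lemma sub_sound {S : SrcSig} {tr : String → String} (htr : CBNTrans S Sg tr) :
    ∀ a b, NegSub Sg (tr a) (tr b) →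
      CBNUnf S (fun x y => NegSub Sg (tr x) (tr y)) a b := by
  intro a b hab
  have ha := htr a
  have hb := htr b
  rcases hab.unfold with ⟨t₁,s₂,u₁,r₂,h1,h2,h3,h4⟩ | ⟨q,q',h1,h2,h3⟩ |
    ⟨L',K',h1,h2,h3⟩ | ⟨q,h1,h2⟩ | hfull
  -- arrow case
  · cases hdefa : S.def_ a <;> rw [hdefa] at ha
    case arrow a₁ a₂ =>
      obtain ⟨p, hp1, hp2⟩ := ha
      rw [hp1] at h1
      injection h1 with h1a h1b
      injection h1a with h1a
      injection h1b with h1b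
      subst h1a; subst h1b
      cases hdefb : S.def_ b <;> rw [hdefb] at hb
      case arrow b₁ b₂ =>
        obtain ⟨p', hp1', hp2'⟩ := hb
        rw [hp1'] at h2
        injection h2 with h2a h2b
        injection h2a with h2a
        injection h2b with h2b
        subst h2a; subst h2b
        exact Or.inl ⟨a₁, a₂, b₁, b₂, hdefa, hdefb, down_sub hp2' hp2 h3, h4⟩
      case tensor b₁ b₂ =>
        obtain ⟨q, p₁, p₂, hq, _⟩ := hb; rw [hq] at h2; exact NegStr.noConfusion h2
      case one =>
        obtain ⟨q, hq, _⟩ := hb; rw [hq] at h2; exact NegStr.noConfusion h2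
      case plus J =>
        obtain ⟨q, Qf, hq, _⟩ := hb; rw [hq] at h2; exact NegStr.noConfusion h2
      case withRec J =>
        rw [hb] at h2; exact NegStr.noConfusion h2
    case tensor a₁ a₂ =>
      obtain ⟨q, p₁, p₂, hq, _⟩ := ha; rw [hq] at h1; exact NegStr.noConfusion h1
    case one =>
      obtain ⟨q, hq, _⟩ := ha; rw [hq] at h1; exact NegStr.noConfusion h1
    case plus L =>
      obtain ⟨q, Pf, hq, _⟩ := ha; rw [hq] at h1; exact NegStr.noConfusion h1
    case withRec L =>
      rw [ha] at h1; exact NegStr.noConfusion h1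
  -- up case
  · rcases h3.unfold with ⟨x₁,x₂,y₁,y₂,hx,hy,hs1,hs2⟩ | ⟨hx,hy⟩ |
      ⟨Lp,Kp,hLp,hKp,hall⟩ | ⟨s',r',hx,_,_⟩ | hemp
    -- tensor ≤ tensor
    · cases hdefa : S.def_ a <;> rw [hdefa] at ha
      case arrow a₁ a₂ =>
        obtain ⟨p, hp1, _⟩ := ha; rw [hp1] at h1; exact NegStr.noConfusion h1
      case tensor a₁ a₂ =>
        obtain ⟨q₀, p₁, p₂, hq0, hq0t, hd1, hd2⟩ := ha
        rw [hq0] at h1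
        injection h1 with h1; injection h1 with h1; subst h1
        rw [hq0t] at hx
        injection hx with hxa hxb
        injection hxa with hxa; injection hxb with hxb
        subst hxa; subst hxb
        cases hdefb : S.def_ b <;> rw [hdefb] at hb
        case arrow b₁ b₂ =>
          obtain ⟨p', hp1', _⟩ := hb; rw [hp1'] at h2; exact NegStr.noConfusion h2
        case tensor b₁ b₂ =>
          obtain ⟨q₀', p₁', p₂', hq0', hq0t', hd1', hd2'⟩ := hb
          rw [hq0'] at h2
          injection h2 with h2; injection h2 with h2; subst h2
          rw [hq0t'] at hy
          injection hy with hya hyb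
          injection hya with hya; injection hyb with hyb
          subst hya; subst hyb
          exact Or.inr (Or.inl ⟨a₁, a₂, b₁, b₂, hdefa, hdefb,
            down_sub hd1 hd1' hs1, down_sub hd2 hd2' hs2⟩)
        case one =>
          obtain ⟨q₀', hq0', hq0o'⟩ := hb
          rw [hq0'] at h2
          injection h2 with h2; injection h2 with h2; subst h2
          rw [hq0o'] at hy; exact PosStr.noConfusion hy
        case plus J =>
          obtain ⟨q₀', Qf, hq0', hq0p', _⟩ := hb
          rw [hq0'] at h2
          injection h2 with h2; injection h2 with h2; subst h2
          rw [hq0p'] at hy; exact PosStr.noConfusion hy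
        case withRec J =>
          rw [hb] at h2; exact NegStr.noConfusion h2
      case one =>
        obtain ⟨q₀, hq0, hq0o⟩ := ha
        rw [hq0] at h1
        injection h1 with h1; injection h1 with h1; subst h1
        rw [hq0o] at hx; exact PosStr.noConfusion hx
      case plus L =>
        obtain ⟨q₀, Pf, hq0, hq0p, _⟩ := ha
        rw [hq0] at h1
        injection h1 with h1; injection h1 with h1; subst h1
        rw [hq0p] at hx; exact PosStr.noConfusion hx
      case withRec L =>
        rw [ha] at h1; exact NegStr.noConfusion h1
    -- one ≤ one
    · cases hdefa : S.def_ a <;> rw [hdefa] at ha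
      case arrow a₁ a₂ =>
        obtain ⟨p, hp1, _⟩ := ha; rw [hp1] at h1; exact NegStr.noConfusion h1
      case tensor a₁ a₂ =>
        obtain ⟨q₀, p₁, p₂, hq0, hq0t, _⟩ := ha
        rw [hq0] at h1
        injection h1 with h1; injection h1 with h1; subst h1
        rw [hq0t] at hx; exact PosStr.noConfusion hx
      case one =>
        obtain ⟨q₀, hq0, hq0o⟩ := ha
        cases hdefb : S.def_ b <;> rw [hdefb] at hb
        case arrow b₁ b₂ =>
          obtain ⟨p', hp1', _⟩ := hb; rw [hp1'] at h2; exact NegStr.noConfusion h2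
        case tensor b₁ b₂ =>
          obtain ⟨q₀', p₁', p₂', hq0', hq0t', _⟩ := hb
          rw [hq0'] at h2
          injection h2 with h2; injection h2 with h2; subst h2
          rw [hq0t'] at hy; exact PosStr.noConfusion hy
        case one =>
          exact Or.inr (Or.inr (Or.inl ⟨hdefa, hdefb⟩))
        case plus J =>
          obtain ⟨q₀', Qf, hq0', hq0p', _⟩ := hb
          rw [hq0'] at h2
          injection h2 with h2; injection h2 with h2; subst h2
          rw [hq0p'] at hy; exact PosStr.noConfusion hy
        case withRec J =>
          rw [hb] at h2; exact NegStr.noConfusion h2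
      case plus L =>
        obtain ⟨q₀, Pf, hq0, hq0p, _⟩ := ha
        rw [hq0] at h1
        injection h1 with h1; injection h1 with h1; subst h1
        rw [hq0p] at hx; exact PosStr.noConfusion hx
      case withRec L =>
        rw [ha] at h1; exact NegStr.noConfusion h1
    -- plus ≤ plus
    · cases hdefa : S.def_ a <;> rw [hdefa] at ha
      case arrow a₁ a₂ =>
        obtain ⟨p, hp1, _⟩ := ha; rw [hp1] at h1; exact NegStr.noConfusion h1
      case tensor a₁ a₂ =>
        obtain ⟨q₀, p₁, p₂, hq0, hq0t, _⟩ := ha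
        rw [hq0] at h1
        injection h1 with h1; injection h1 with h1; subst h1
        rw [hq0t] at hLp; exact PosStr.noConfusion hLp
      case one =>
        obtain ⟨q₀, hq0, hq0o⟩ := ha
        rw [hq0] at h1
        injection h1 with h1; injection h1 with h1; subst h1
        rw [hq0o] at hLp; exact PosStr.noConfusion hLp
      case plus L =>
        obtain ⟨q₀, Pf, hq0, hq0p, hPf⟩ := ha
        rw [hq0] at h1
        injection h1 with h1; injection h1 with h1; subst h1
        rw [hq0p] at hLp
        injection hLp with hLp
        subst hLp
        cases hdefb : S.def_ b <;> rw [hdefb] at hb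
        case arrow b₁ b₂ =>
          obtain ⟨p', hp1', _⟩ := hb; rw [hp1'] at h2; exact NegStr.noConfusion h2
        case tensor b₁ b₂ =>
          obtain ⟨q₀', p₁', p₂', hq0', hq0t', _⟩ := hb
          rw [hq0'] at h2
          injection h2 with h2; injection h2 with h2; subst h2
          rw [hq0t'] at hKp; exact PosStr.noConfusion hKp
        case one =>
          obtain ⟨q₀', hq0', hq0o'⟩ := hb
          rw [hq0'] at h2
          injection h2 with h2; injection h2 with h2; subst h2
          rw [hq0o'] at hKp; exact PosStr.noConfusion hKp
        case plus J =>
          obtain ⟨q₀', Qf, hq0', hq0p', hQf⟩ := hb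
          rw [hq0'] at h2
          injection h2 with h2; injection h2 with h2; subst h2
          rw [hq0p'] at hKp
          injection hKp with hKp
          subst hKp
          refine Or.inr (Or.inr (Or.inr (Or.inl ⟨L, J, hdefa, hdefb, fun p hp => ?_⟩)))
          obtain ⟨tj, heq, hc⟩ := hall (p.1, PosTp.name (Pf p))
            (List.mem_map_of_mem (f := fun p => (p.1, PosTp.name (Pf p))) hp)
          injection heq with heq
          subst heq
          rcases hc with hemp | ⟨uj, hlook, hsub⟩
          · exact absurd hemp (not_empty_down (hPf p hp))
          · obtain ⟨j, hj, hjlook, hje⟩ :=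
              lookup_map_named (fun j => PosTp.name (Qf j)) J p.1 _ hlook
            injection hje with hje
            subst hje
            exact ⟨j.2, hjlook, down_sub (hPf p hp) (hQf j hj) hsub⟩
        case withRec J =>
          rw [hb] at h2; exact NegStr.noConfusion h2
      case withRec L =>
        rw [ha] at h1; exact NegStr.noConfusion h1
    -- down ≤ down (impossible for CBN translations)
    · cases hdefa : S.def_ a <;> rw [hdefa] at ha
      case arrow a₁ a₂ =>
        obtain ⟨p, hp1, _⟩ := ha; rw [hp1] at h1; exact NegStr.noConfusion h1
      case tensor a₁ a₂ =>
        obtain ⟨q₀, p₁, p₂, hq0, hq0t, _⟩ := ha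
        rw [hq0] at h1
        injection h1 with h1; injection h1 with h1; subst h1
        rw [hq0t] at hx; exact PosStr.noConfusion hx
      case one =>
        obtain ⟨q₀, hq0, hq0o⟩ := ha
        rw [hq0] at h1
        injection h1 with h1; injection h1 with h1; subst h1
        rw [hq0o] at hx; exact PosStr.noConfusion hx
      case plus L =>
        obtain ⟨q₀, Pf, hq0, hq0p, _⟩ := ha
        rw [hq0] at h1
        injection h1 with h1; injection h1 with h1; subst h1
        rw [hq0p] at hx; exact PosStr.noConfusion hx
      case withRec L =>
        rw [ha] at h1; exact NegStr.noConfusion h1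
    -- empty
    · exact Or.inr (Or.inr (Or.inr (Or.inr (Or.inr (Or.inl (up_empty htr h1 hemp))))))
  -- withRec case
  · cases hdefa : S.def_ a <;> rw [hdefa] at ha
    case arrow a₁ a₂ =>
      obtain ⟨p, hp1, _⟩ := ha; rw [hp1] at h1; exact NegStr.noConfusion h1
    case tensor a₁ a₂ =>
      obtain ⟨q, p₁, p₂, hq, _⟩ := ha; rw [hq] at h1; exact NegStr.noConfusion h1
    case one =>
      obtain ⟨q, hq, _⟩ := ha; rw [hq] at h1; exact NegStr.noConfusion h1
    case plus L =>
      obtain ⟨q, Pf, hq, _⟩ := ha; rw [hq] at h1; exact NegStr.noConfusion h1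
    case withRec L =>
      rw [ha] at h1
      injection h1 with h1
      subst h1
      cases hdefb : S.def_ b <;> rw [hdefb] at hb
      case arrow b₁ b₂ =>
        obtain ⟨p', hp1', _⟩ := hb; rw [hp1'] at h2; exact NegStr.noConfusion h2
      case tensor b₁ b₂ =>
        obtain ⟨q', p₁', p₂', hq', _⟩ := hb; rw [hq'] at h2; exact NegStr.noConfusion h2
      case one =>
        obtain ⟨q', hq', _⟩ := hb; rw [hq'] at h2; exact NegStr.noConfusion h2
      case plus J =>
        obtain ⟨q', Qf, hq', _⟩ := hb; rw [hq'] at h2; exact NegStr.noConfusion h2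
      case withRec J =>
        rw [hb] at h2
        injection h2 with h2
        subst h2
        refine Or.inr (Or.inr (Or.inr (Or.inr (Or.inl
          ⟨L, J, hdefa, hdefb, fun j hj => ?_⟩))))
        obtain ⟨rj, heq, sj, hlook, hsub⟩ := h3 (j.1, NegTp.name (tr j.2))
          (List.mem_map_of_mem (f := fun p => (p.1, NegTp.name (tr p.2))) hj)
        injection heq with heq
        subst heq
        obtain ⟨p, hp, hplook, hpe⟩ :=
          lookup_map_named (fun p => NegTp.name (tr p.2)) L j.1 _ hlook
        injection hpe with hpe
        subst hpe
        exact ⟨p.2, hplook, hsub⟩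
  · exact Or.inr (Or.inr (Or.inr (Or.inr (Or.inr (Or.inl (up_empty htr h1 h2))))))
  · exact Or.inr (Or.inr (Or.inr (Or.inr (Or.inr (Or.inr (full_sound htr hfull))))))

end Sound

/-- Soundness of polarized subtyping for call-by-name: for call-by-name type
names `t`, `u` and their Levy translations `[t]_N`, `[u]_N` into negative
CBPV type names,
(1) if `[t]_N full` (CBPV fullness) then `t full` (CBN fullness), and
(2) if `[t]_N ≤ [u]_N` (CBPV negative subtyping) then `t ≤ u` (CBN subtyping). -/
theorem cbn_subtyping_sound (S : SrcSig) (Sg : Signature)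
    (tr : String → String) (htr : CBNTrans S Sg tr) :
    (∀ t : String, TpFull Sg (tr t) → CBNFull S t) ∧
    (∀ t u : String, NegSub Sg (tr t) (tr u) → CBNSub S t u) := by
  constructor
  · intro t h; exact full_sound htr h
  · intro t u h
    exact ⟨fun x y => NegSub Sg (tr x) (tr y), sub_sound htr, h⟩

end CBPV
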